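/- For every u ∈ (0, π/2) one has f₁(u) := 8u + 4u·cos(4u) − 3·sin(4u) > 0. -/

import Mathlib

open Set Real

lemma pos_of_deriv_pos_aux (f : ℝ → ℝ) (hf : Continuous f) (h0 : f 0 = 0)
    (hd : ∀ t ∈ Ioo 0 π, 0 < deriv f t) : ∀ t ∈ Ioc 0 π, 0 < f t := by
  have hmono : StrictMonoOn f (Icc 0 π) := by
    apply strictMonoOn_of_deriv_pos (convex_Icc 0 π) hf.continuousOn
    intro x hx
    rw [interior_Icc] at hx
    exact hd x hx
  intro t ht
  have h := hmono ⟨le_refl 0, Real.pi_pos.le⟩ ⟨ht.1.le, ht.2⟩ ht.1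
  simpa [h0] using h

lemma L1 : ∀ t ∈ Ioc 0 π, 0 < sin t - t * cos t := by
  apply pos_of_deriv_pos_aux
  · continuity
  · simp
  · intro t ht
    have h : HasDerivAt (fun t : ℝ => sin t - t * cos t) (t * sin t) t := by
      have h1 := Real.hasDerivAt_sin t
      have h2 := (hasDerivAt_id t).mul (Real.hasDerivAt_cos t)
      refine (h1.sub h2).congr_deriv ?_
      simp
    rw [h.deriv]
    exact mul_pos ht.1 (Real.sin_pos_of_pos_of_lt_pi ht.1 ht.2)

lemma L2 : ∀ t ∈ Ioc 0 π, 0 < 2 - 2 * cos t - t * sin t := by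
  apply pos_of_deriv_pos_aux
  · continuity
  · simp
  · intro t ht
    have h : HasDerivAt (fun t : ℝ => 2 - 2 * cos t - t * sin t)
        (sin t - t * cos t) t := by
      have h1 := (Real.hasDerivAt_cos t).const_mul (2 : ℝ)
      have h2 := (hasDerivAt_id t).mul (Real.hasDerivAt_sin t)
      refine (((hasDerivAt_const t (2:ℝ)).sub h1).sub h2).congr_deriv ?_
      simp; ring
    rw [h.deriv]
    exact L1 t ⟨ht.1, ht.2.le⟩

lemma L3 : ∀ t ∈ Ioc 0 π, 0 < 2 * t + t * cos t - 3 * sin t := by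
  apply pos_of_deriv_pos_aux
  · continuity
  · simp
  · intro t ht
    have h : HasDerivAt (fun t : ℝ => 2 * t + t * cos t - 3 * sin t)
        (2 - 2 * cos t - t * sin t) t := by
      have h1 := (hasDerivAt_id t).const_mul (2 : ℝ)
      have h2 := (hasDerivAt_id t).mul (Real.hasDerivAt_cos t)
      have h3 := (Real.hasDerivAt_sin t).const_mul (3 : ℝ)
      refine ((h1.add h2).sub h3).congr_deriv ?_
      simp; ring
    rw [h.deriv]
    exact L2 t ⟨ht.1, ht.2.le⟩

/-- Lemma: `f₁(u) = 8u + 4u·cos(4u) − 3·sin(4u) > 0` for `u ∈ (0, π/2)`. -/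
theorem f1_pos :
    ∀ u ∈ Ioo 0 (π/2), 0 < 8 * u + 4 * u * cos (4 * u) - 3 * sin (4 * u) := by
  intro u hu
  obtain ⟨hu0, hu2⟩ := hu
  rcases le_or_gt (4 * u) π with h | h
  · have := L3 (4 * u) ⟨by linarith, h⟩
    linarith
  · have hc := Real.neg_one_le_cos (4 * u)
    have hs := Real.sin_le_one (4 * u)
    have hpi := Real.pi_gt_three
    nlinarith
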